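/- Lumpable bisimilarity is a congruence for prefixing: if P₁ ≈_l P₂ then for every activity a = (α,r), a.P₁ ≈_l a.P₂. -/

import Mathlib

open scoped ENNReal Classical

/-- Action types: a countable set with a distinguished silent type `tau`. -/
inductive Act : Type where
  | tau : Act
  | vis : ℕ → Act
deriving DecidableEq

/-- PEPA components: prefix `(α,r).P`, choice `P+Q`, cooperation `P ⊲⊳_L Q`,
hiding `P/L`, and constants `A` (given by an environment of defining equations).
Rates live in `ℝ≥0∞` (positive reals together with the unspecified symbol `⊤`). -/
inductive Proc : Type where
  | pre : Act → ℝ≥0∞ → Proc → Proc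
  | choice : Proc → Proc → Proc
  | coop : Proc → Set Act → Proc → Proc
  | hide : Proc → Set Act → Proc
  | const : ℕ → Proc

namespace PEPA

/-- Fuelled conditional transition rate `qF E n P α P'`: the total rate
(with multiplicities) of the `α`-transitions from `P` to `P'` in the
multi-transition system given by the operational semantics of Table 1,
computed with `n` units of fuel for unfolding constants.
The shared-activity (cooperation) rule uses the apparent rates
`r_α(P) = ∑' X, qF E n P α X` as in
`R = (r₁/r_α(P)) · (r₂/r_α(Q)) · min(r_α(P), r_α(Q))`. -/
noncomputable def qF (E : ℕ → Proc) : ℕ → Proc → Act → Proc → ℝ≥0∞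
  | 0, _, _, _ => 0
  | n+1, .pre β r P, α, X => if β = α ∧ X = P then r else 0
  | n+1, .choice P Q, α, X => qF E n P α X + qF E n Q α X
  | n+1, .hide P L, α, X =>
      match X with
      | .hide P' L' =>
          if L' = L then
            if α = .tau then qF E n P .tau P' + ∑' β : L, qF E n P β P'
            else if α ∈ L then 0 else qF E n P α P'
          else 0
      | _ => 0
  | n+1, .coop P L Q, α, X =>
      match X with
      | .coop P' L' Q' =>
          if L' = L then
            if α ∈ L then
              (qF E n P α P' / ∑' Y, qF E n P α Y) * (qF E n Q α Q' / ∑' Y, qF E n Q α Y)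
                * min (∑' Y, qF E n P α Y) (∑' Y, qF E n Q α Y)
            else
              (if Q' = Q then qF E n P α P' else 0) + (if P' = P then qF E n Q α Q' else 0)
          else 0
      | _ => 0
  | n+1, .const c, α, X => qF E n (E c) α X

/-- `q E P α P'` : the (total) conditional transition rate from `P` to `P'`
via action type `α`, i.e. the sum of the rates over all transitions
`P --(α,r)--> P'` of the multi-transition system. -/
noncomputable def q (E : ℕ → Proc) (P : Proc) (α : Act) (P' : Proc) : ℝ≥0∞ :=
  ⨆ n, qF E n P α P'

/-- Total conditional transition rate `q[P,S,α] = Σ_{P'∈S} q(P,P',α)`. -/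
noncomputable def qTo (E : ℕ → Proc) (P : Proc) (S : Set Proc) (α : Act) : ℝ≥0∞ :=
  ∑' P' : S, q E P α P'

/-- One step of the derivation graph: `P` has some transition to `P'`. -/
def Step (E : ℕ → Proc) (P P' : Proc) : Prop := ∃ α, q E P α P' ≠ 0

/-- The derivative set `ds(P)`: the set of states reachable from `P`. -/
def ds (E : ℕ → Proc) (P : Proc) : Set Proc :=
  {P' | Relation.ReflTransGen (Step E) P P'}

/-- `𝒜(P)`: the set of current action types of `P`. -/
def curTypes (E : ℕ → Proc) (P : Proc) : Set Act :=
  {α | ∃ P', q E P α P' ≠ 0}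

/-- The set of equivalence classes `𝒞/ℛ` of a relation `ℛ`. -/
def eqCls (R : Proc → Proc → Prop) : Set (Set Proc) :=
  {S | ∃ P, S = {Q | R P Q}}

/-- A lumpable bisimulation: an equivalence relation `R` such that whenever
`R P Q`, then for all `α` and all classes `S` of `R` with either `α ≠ τ`, or
`α = τ` and `P,Q ∉ S`, it holds that `q[P,S,α] = q[Q,S,α]`. -/
def IsLumpBisim (E : ℕ → Proc) (R : Proc → Proc → Prop) : Prop :=
  Equivalence R ∧
    ∀ P Q, R P Q → ∀ α, ∀ S ∈ eqCls R,
      (α ≠ Act.tau ∨ (P ∉ S ∧ Q ∉ S)) → qTo E P S α = qTo E Q S α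

/-- Lumpable bisimilarity `≈_l`: the union of all lumpable bisimulations. -/
def lb (E : ℕ → Proc) (P Q : Proc) : Prop :=
  ∃ R, IsLumpBisim E R ∧ R P Q

section High

-- `Hs` is the set `ℋ` of high action types (the remaining visible types are low).
variable (E : ℕ → Proc) (Hs : Set Act)

/-- A high level component: every derivative may next engage in high types only. -/
def IsHighComp (Hc : Proc) : Prop := ∀ H' ∈ ds E Hc, curTypes E H' ⊆ Hs

/-- The set `ℒ` of low action types. -/
def Low : Set Act := {α | α ∉ Hs ∧ α ≠ Act.tau}

/-- An inert component: a high level component performing no activity at all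
(hence sharing no action type with any component). -/
def inert : Proc := .pre .tau 0 (.const 0)

/-- `P \ ℋ` : `P ⊲⊳_ℋ H̄` where `H̄` is a high level component that does not
cooperate with `P` (it shares no action types with the derivatives of `P`). -/
def restr (P : Proc) : Proc := .coop P Hs inert

/-- The high context `C[_] = (_ ⊲⊳_ℋ Hc)/ℋ` applied to `P`. -/
def hctx (Hc P : Proc) : Proc := .hide (.coop P Hs Hc) Hs

/-- Stochastic Non-Interference: `P\ℋ ≈_l (P ⊲⊳_ℋ H)/ℋ` for every high `H`. -/
def SNI (P : Proc) : Prop :=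
  ∀ Hc, IsHighComp E Hs Hc → lb E (restr Hs P) (hctx Hs Hc P)

/-- Persistent Stochastic Non-Interference: every derivative of `P` satisfies SNI. -/
def PSNI (P : Proc) : Prop := ∀ P' ∈ ds E P, SNI E Hs P'

/-- `q_C(P,P',α)`: the sum of the rates over all transitions
`C[P] --(α,r)--> C'[P']` (with `C'[_]` ranging over high contexts). -/
noncomputable def qC (Hc P : Proc) (α : Act) (P' : Proc) : ℝ≥0∞ :=
  ∑' Hc' : Proc, q E (hctx Hs Hc P) α (hctx Hs Hc' P')

/-- `q_C[P,S,α] = Σ_{P'∈S} q_C(P,P',α)`. -/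
noncomputable def qCTo (Hc P : Proc) (S : Set Proc) (α : Act) : ℝ≥0∞ :=
  ∑' P' : S, qC E Hs Hc P α P'

/-- A lumpable bisimulation on high contexts. -/
def IsLumpBisimHC (R : Proc → Proc → Prop) : Prop :=
  Equivalence R ∧
    ∀ P Q, R P Q → ∀ Hc, IsHighComp E Hs Hc → ∀ α, ∀ S ∈ eqCls R,
      (α ≠ Act.tau ∨ (P ∉ S ∧ Q ∉ S)) →
        qCTo E Hs Hc P S α = qCTo E Hs Hc Q S α

/-- Lumpable bisimilarity on high contexts `≈_l^hc`. -/
def lbhc (P Q : Proc) : Prop := ∃ R, IsLumpBisimHC E Hs R ∧ R P Q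

/-- A lumpable bisimulation up to `ℋ`. -/
def IsLumpBisimUpto (R : Proc → Proc → Prop) : Prop :=
  Equivalence R ∧
    ∀ P Q, R P Q → ∀ α, ∀ S ∈ eqCls R,
      ((α ∉ Hs ∧ α ≠ Act.tau) → qTo E P S α = qTo E Q S α) ∧
      ((α ∈ Hs ∨ α = Act.tau) → P ∉ S → Q ∉ S → qTo E P S α = qTo E Q S α)

/-- Lumpable bisimilarity up to `ℋ`, written `≈_l^ℋ`. -/
def lbUpto (P Q : Proc) : Prop := ∃ R, IsLumpBisimUpto E Hs R ∧ R P Q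

end High

end PEPA

open PEPA
lemma q_pre (E : ℕ → Proc) (β : Act) (r : ℝ≥0∞) (P : Proc) (γ : Act) (X : Proc) :
    q E (.pre β r P) γ X = if β = γ ∧ X = P then r else 0 := by
  unfold q
  apply le_antisymm
  · apply iSup_le; intro n
    cases n with
    | zero => simp [qF]
    | succ n => simp [qF]
  · have := le_iSup (fun n => qF E n (.pre β r P) γ X) 1
    simpa [qF] using this

lemma qTo_pre (E : ℕ → Proc) (β : Act) (r : ℝ≥0∞) (P : Proc) (T : Set Proc) (γ : Act) :
    qTo E (.pre β r P) T γ = if β = γ ∧ P ∈ T then r else 0 := by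
  unfold qTo
  simp only [q_pre]
  by_cases hβ : β = γ
  · subst hβ
    simp only [true_and]
    by_cases hP : P ∈ T
    · rw [if_pos hP]
      rw [tsum_eq_single (⟨P, hP⟩ : T)]
      · simp
      · intro b hb
        rw [if_neg]
        intro hbP
        exact hb (Subtype.ext hbP)
    · rw [if_neg hP]
      have h0 : ∀ x : T, (if (x : Proc) = P then r else 0) = 0 := by
        rintro ⟨x, hx⟩
        rw [if_neg]
        rintro rfl
        exact hP hx
      calc (∑' x : T, if (x : Proc) = P then r else 0) = ∑' _ : T, (0:ℝ≥0∞) :=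
            tsum_congr h0
        _ = 0 := tsum_zero
  · simp [hβ]

lemma qTo_union (E : ℕ → Proc) (X : Proc) (γ : Act) {S₁ S₂ : Set Proc}
    (hd : Disjoint S₁ S₂) :
    qTo E X (S₁ ∪ S₂) γ = qTo E X S₁ γ + qTo E X S₂ γ := by
  unfold qTo
  exact ENNReal.summable.tsum_union_disjoint hd ENNReal.summable


/-- Lumpable bisimilarity is a congruence for prefixing:
if `P₁ ≈_l P₂` then `a.P₁ ≈_l a.P₂` for every activity `a = (α,r)`. -/
theorem lb_congr_pre (E : ℕ → Proc) (P₁ P₂ : Proc) (h : lb E P₁ P₂) :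
    ∀ (α : Act) (r : ℝ≥0∞), lb E (.pre α r P₁) (.pre α r P₂) := by
  intro β r
  obtain ⟨R, ⟨hEq, hBis⟩, hPQ⟩ := h
  set A := Proc.pre β r P₁ with hA
  set B := Proc.pre β r P₂ with hB
  by_cases hAB : R A B
  · exact ⟨R, ⟨hEq, hBis⟩, hAB⟩
  set S : Set Proc := {X | R A X} ∪ {X | R B X} with hSdef
  have hAin : A ∈ S := Or.inl (hEq.refl A)
  have hBin : B ∈ S := Or.inr (hEq.refl B)
  have hSclosed : ∀ {X Y : Proc}, X ∈ S → R X Y → Y ∈ S := by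
    rintro X Y (hX | hX) hXY
    · exact Or.inl (hEq.trans hX hXY)
    · exact Or.inr (hEq.trans hX hXY)
  set R' : Proc → Proc → Prop := fun X Y => R X Y ∨ (X ∈ S ∧ Y ∈ S) with hR'def
  have hEq' : Equivalence R' := by
    constructor
    · intro X; exact Or.inl (hEq.refl X)
    · rintro X Y (h1 | ⟨h1, h2⟩)
      · exact Or.inl (hEq.symm h1)
      · exact Or.inr ⟨h2, h1⟩
    · rintro X Y Z (h1 | ⟨h1, h1'⟩) (h2 | ⟨h2, h2'⟩)
      · exact Or.inl (hEq.trans h1 h2)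
      · exact Or.inr ⟨hSclosed h2 (hEq.symm h1), h2'⟩
      · exact Or.inr ⟨h1, hSclosed h1' h2⟩
      · exact Or.inr ⟨h1, h2'⟩
  have hdisj : Disjoint {X | R A X} {X | R B X} := by
    rw [Set.disjoint_left]
    intro X hX hX'
    exact hAB (hEq.trans hX (hEq.symm hX'))
  have hclsA : {X | R A X} ∈ eqCls R := ⟨A, rfl⟩
  have hclsB : {X | R B X} ∈ eqCls R := ⟨B, rfl⟩
  -- split qTo over S
  have hsplit : ∀ (X : Proc) (γ : Act),
      qTo E X S γ = qTo E X {Y | R A Y} γ + qTo E X {Y | R B Y} γ := by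
    intro X γ
    exact qTo_union E X γ hdisj
  -- qTo from A equals qTo from B on every R'-class
  have hq : ∀ (γ : Act) (T : Set Proc), T ∈ eqCls R' → qTo E A T γ = qTo E B T γ := by
    rintro γ T ⟨P₀, rfl⟩
    rw [hA, hB, qTo_pre, qTo_pre]
    have hmem : P₁ ∈ {Q | R' P₀ Q} ↔ P₂ ∈ {Q | R' P₀ Q} := by
      constructor
      · rintro (h1 | ⟨h1, h2⟩)
        · exact Or.inl (hEq.trans h1 hPQ)
        · exact Or.inr ⟨h1, hSclosed h2 hPQ⟩
      · rintro (h1 | ⟨h1, h2⟩)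
        · exact Or.inl (hEq.trans h1 (hEq.symm hPQ))
        · exact Or.inr ⟨h1, hSclosed h2 (hEq.symm hPQ)⟩
    simp only [hmem]
    congr 1
  -- classification of R'-classes
  have hcls : ∀ T ∈ eqCls R', (T ∈ eqCls R ∧ Disjoint T S) ∨ T = S := by
    rintro T ⟨P₀, rfl⟩
    by_cases hP₀ : P₀ ∈ S
    · right
      ext Q
      constructor
      · rintro (h1 | ⟨_, h2⟩)
        · exact hSclosed hP₀ h1
        · exact h2
      · intro hQ
        exact Or.inr ⟨hP₀, hQ⟩
    · left
      have hTeq : {Q | R' P₀ Q} = {Q | R P₀ Q} := by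
        ext Q
        constructor
        · rintro (h1 | ⟨h1, _⟩)
          · exact h1
          · exact absurd h1 hP₀
        · exact Or.inl
      rw [hTeq]
      refine ⟨⟨P₀, rfl⟩, ?_⟩
      rw [Set.disjoint_left]
      intro Q hQ hQS
      exact hP₀ (hSclosed hQS (hEq.symm hQ))
  -- key: for X with R C X (C ∈ S), qTo X T = qTo C T under side condition
  refine ⟨R', ⟨hEq', ?_⟩, Or.inr ⟨hAin, hBin⟩⟩
  -- auxiliary: transfer along R within the new classes
  have key : ∀ (X Y : Proc), R X Y → ∀ γ, ∀ T ∈ eqCls R',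
      (γ ≠ Act.tau ∨ (X ∉ T ∧ Y ∉ T)) → qTo E X T γ = qTo E Y T γ := by
    intro X Y hXY γ T hT hcond
    rcases hcls T hT with ⟨hTR, hTS⟩ | rfl
    · exact hBis X Y hXY γ T hTR hcond
    · -- T = S
      rw [hsplit X γ, hsplit Y γ]
      have hcA : (γ ≠ Act.tau ∨ (X ∉ {Y | R A Y} ∧ Y ∉ {Y | R A Y})) := by
        rcases hcond with h1 | ⟨h1, h2⟩
        · exact Or.inl h1
        · exact Or.inr ⟨fun hh => h1 (Or.inl hh), fun hh => h2 (Or.inl hh)⟩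
      have hcB : (γ ≠ Act.tau ∨ (X ∉ {Y | R B Y} ∧ Y ∉ {Y | R B Y})) := by
        rcases hcond with h1 | ⟨h1, h2⟩
        · exact Or.inl h1
        · exact Or.inr ⟨fun hh => h1 (Or.inr hh), fun hh => h2 (Or.inr hh)⟩
      rw [hBis X Y hXY γ _ hclsA hcA, hBis X Y hXY γ _ hclsB hcB]
  intro X Y hXY γ T hT hcond
  rcases hXY with hXY | ⟨hX, hY⟩
  · exact key X Y hXY γ T hT hcond
  · -- X, Y ∈ S
    obtain ⟨CX, hCXAB, hCX⟩ : ∃ C, (C = A ∨ C = B) ∧ R C X := by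
      rcases hX with h1 | h1
      · exact ⟨A, Or.inl rfl, h1⟩
      · exact ⟨B, Or.inr rfl, h1⟩
    obtain ⟨CY, hCYAB, hCY⟩ : ∃ C, (C = A ∨ C = B) ∧ R C Y := by
      rcases hY with h1 | h1
      · exact ⟨A, Or.inl rfl, h1⟩
      · exact ⟨B, Or.inr rfl, h1⟩
    have hCXS : CX ∈ S := by rcases hCXAB with rfl | rfl; exacts [hAin, hBin]
    have hCYS : CY ∈ S := by rcases hCYAB with rfl | rfl; exacts [hAin, hBin]
    have step1 : qTo E X T γ = qTo E CX T γ := by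
      apply key X CX (hEq.symm hCX) γ T hT
      rcases hcls T hT with ⟨_, hTS⟩ | rfl
      · rcases hcond with h1 | ⟨h1, h2⟩
        · exact Or.inl h1
        · exact Or.inr ⟨h1, fun hh => (Set.disjoint_left.mp hTS hh) hCXS⟩
      · -- T = S, but X ∈ S so condition forces γ ≠ τ
        rcases hcond with h1 | ⟨h1, _⟩
        · exact Or.inl h1
        · exact absurd hX h1
    have step3 : qTo E Y T γ = qTo E CY T γ := by
      apply key Y CY (hEq.symm hCY) γ T hT
      rcases hcls T hT with ⟨_, hTS⟩ | rfl
      · rcases hcond with h1 | ⟨h1, h2⟩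
        · exact Or.inl h1
        · exact Or.inr ⟨h2, fun hh => (Set.disjoint_left.mp hTS hh) hCYS⟩
      · rcases hcond with h1 | ⟨_, h2⟩
        · exact Or.inl h1
        · exact absurd hY h2
    have step2 : qTo E CX T γ = qTo E CY T γ := by
      rcases hCXAB with rfl | rfl <;> rcases hCYAB with rfl | rfl
      · rfl
      · exact hq γ T hT
      · exact (hq γ T hT).symm
      · rfl
    rw [step1, step2, step3]
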